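/- For finite simple graphs G and H, the stress number of the Cartesian product satisfies sn(G □ H) ≤ min{ sn(G)·|V(H)|, sn(H)·|V(G)| }. -/

import Mathlib

/-- The interval `I(u,v)`: vertices lying on some shortest `u,v`-path. -/
def SimpleGraph.interval {V : Type*} (G : SimpleGraph V) (u v : V) : Set V :=
  {x | ∃ p : G.Walk u v, p.IsPath ∧ p.length = G.dist u v ∧ x ∈ p.support}

/-- The stress interval `S(u,v)`: vertices lying on every shortest `u,v`-path
(empty if `u` and `v` are in different components). -/
def SimpleGraph.stressInterval {V : Type*} (G : SimpleGraph V) (u v : V) : Set V :=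
  {x | G.Reachable u v ∧
    ∀ p : G.Walk u v, p.IsPath → p.length = G.dist u v → x ∈ p.support}

/-- A set of vertices is stress convex if it contains the stress interval
between any two of its elements. -/
def SimpleGraph.IsStressConvex {V : Type*} (G : SimpleGraph V) (U : Set V) : Prop :=
  ∀ ⦃u⦄, u ∈ U → ∀ ⦃v⦄, v ∈ U → G.stressInterval u v ⊆ U

/-- `G` is s-trivial if every stress interval is contained in its endpoints. -/
def SimpleGraph.STrivial {V : Type*} (G : SimpleGraph V) : Prop :=
  ∀ u v : V, G.stressInterval u v ⊆ {u, v}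

/-- The stress number: minimum cardinality of a set `U` with
`⋃_{u,v ∈ U} S(u,v) = V(G)`. -/
noncomputable def SimpleGraph.stressNumber {V : Type*} (G : SimpleGraph V) : ℕ :=
  sInf {n | ∃ U : Set V,
    (⋃ u ∈ U, ⋃ v ∈ U, G.stressInterval u v) = Set.univ ∧ U.ncard = n}

/-- The stress convex hull of `U`: the smallest stress convex set containing `U`. -/
def SimpleGraph.stressHull {V : Type*} (G : SimpleGraph V) (U : Set V) : Set V :=
  ⋂₀ {W : Set V | G.IsStressConvex W ∧ U ⊆ W}

/-- The stress hull number: minimum cardinality of a set whose stress convex hull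
is the whole vertex set. -/
noncomputable def SimpleGraph.stressHullNumber {V : Type*} (G : SimpleGraph V) : ℕ :=
  sInf {n | ∃ U : Set V, G.stressHull U = Set.univ ∧ U.ncard = n}

/-- A vertex is s-extreme if its complement is stress convex. -/
def SimpleGraph.IsSExtreme {V : Type*} (G : SimpleGraph V) (v : V) : Prop :=
  G.IsStressConvex {v}ᶜ

section Aux

open SimpleGraph

variable {V W : Type*} {G : SimpleGraph V} {H : SimpleGraph W}

private lemma keyL {x y : V × W} (p : (G.boxProd H).Walk x y) :
    ∃ q : G.Walk x.1 y.1, q.length ≤ p.length ∧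
      (q.length = p.length → p.support = q.support.map (fun a => (a, y.2))) := by
  induction p with
  | nil => exact ⟨.nil, le_refl _, fun _ => rfl⟩
  | @cons a b c h p ih =>
    obtain ⟨q', hle, heq⟩ := ih
    rcases id h with ⟨hG, h2⟩ | ⟨hH, h1⟩
    · refine ⟨.cons hG q', by simpa using Nat.succ_le_succ hle, fun hl => ?_⟩
      have hl' : q'.length = p.length := by simpa using hl
      have hs := heq hl'
      have hb : b ∈ q'.support.map (fun a => (a, c.2)) := hs ▸ p.start_mem_support
      have hb2 : b.2 = c.2 := by
        obtain ⟨z, _, hbz⟩ := List.mem_map.mp hb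
        exact (congrArg Prod.snd hbz).symm
      simp only [SimpleGraph.Walk.support_cons, hs, List.map_cons, List.cons.injEq]
      exact ⟨by rw [← hb2, ← h2], trivial⟩
    · refine ⟨q'.copy h1.symm rfl, by simp; omega, fun hl => ?_⟩
      simp at hl; omega

private lemma keyR {x y : V × W} (p : (G.boxProd H).Walk x y) :
    ∃ q : H.Walk x.2 y.2, q.length ≤ p.length ∧
      (q.length = p.length → p.support = q.support.map (fun b => (y.1, b))) := by
  induction p with
  | nil => exact ⟨.nil, le_refl _, fun _ => rfl⟩
  | @cons a b c h p ih =>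
    obtain ⟨q', hle, heq⟩ := ih
    rcases id h with ⟨hG, h2⟩ | ⟨hH, h1⟩
    · refine ⟨q'.copy h2.symm rfl, by simp; omega, fun hl => ?_⟩
      simp at hl; omega
    · refine ⟨.cons hH q', by simpa using Nat.succ_le_succ hle, fun hl => ?_⟩
      have hl' : q'.length = p.length := by simpa using hl
      have hs := heq hl'
      have hb : b ∈ q'.support.map (fun z => (c.1, z)) := hs ▸ p.start_mem_support
      have hb1 : b.1 = c.1 := by
        obtain ⟨z, _, hbz⟩ := List.mem_map.mp hb
        exact (congrArg Prod.fst hbz).symm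
      simp only [SimpleGraph.Walk.support_cons, hs, List.map_cons, List.cons.injEq]
      exact ⟨by rw [← hb1, ← h1], trivial⟩

private lemma stressL {u v x : V} (hx : x ∈ G.stressInterval u v) (w : W) :
    (x, w) ∈ (G.boxProd H).stressInterval (u, w) (v, w) := by
  obtain ⟨hr, hx⟩ := hx
  have hrb : (G.boxProd H).Reachable (u, w) (v, w) :=
    hr.elim fun p => ⟨p.boxProdLeft H w⟩
  classical
  refine ⟨hrb, fun p hp hl => ?_⟩
  obtain ⟨q0, hq0p, hq0l⟩ := hr.exists_path_of_dist
  have hdle : (G.boxProd H).dist (u, w) (v, w) ≤ G.dist u v := by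
    have h1 := SimpleGraph.dist_le (q0.boxProdLeft H w)
    have h2 : (q0.boxProdLeft H w).length = q0.length := by
      exact SimpleGraph.Walk.length_map _ _
    omega
  obtain ⟨q, hqle, hqeq⟩ := keyL p
  have hdge : G.dist u v ≤ q.length := SimpleGraph.dist_le q
  have h1 : q.length = p.length := by omega
  have hs := hqeq h1
  have hql : q.length = G.dist u v := by omega
  have hxq : x ∈ q.support := by
    have hbl : q.bypass.length = G.dist u v :=
      le_antisymm (hql ▸ q.length_bypass_le) (SimpleGraph.dist_le _)
    exact q.support_bypass_subset (hx q.bypass q.bypass_isPath hbl)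
  rw [hs]
  exact List.mem_map.mpr ⟨x, hxq, rfl⟩

private lemma stressR {u v : W} {x : W} (hx : x ∈ H.stressInterval u v) (w : V) :
    (w, x) ∈ (G.boxProd H).stressInterval (w, u) (w, v) := by
  obtain ⟨hr, hx⟩ := hx
  have hrb : (G.boxProd H).Reachable (w, u) (w, v) :=
    hr.elim fun p => ⟨p.boxProdRight G w⟩
  classical
  refine ⟨hrb, fun p hp hl => ?_⟩
  obtain ⟨q0, hq0p, hq0l⟩ := hr.exists_path_of_dist
  have hdle : (G.boxProd H).dist (w, u) (w, v) ≤ H.dist u v := by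
    have h1 := SimpleGraph.dist_le (q0.boxProdRight G w)
    have h2 : (q0.boxProdRight G w).length = q0.length := by
      exact SimpleGraph.Walk.length_map _ _
    omega
  obtain ⟨q, hqle, hqeq⟩ := keyR p
  have hdge : H.dist u v ≤ q.length := SimpleGraph.dist_le q
  have h1 : q.length = p.length := by omega
  have hs := hqeq h1
  have hql : q.length = H.dist u v := by omega
  have hxq : x ∈ q.support := by
    have hbl : q.bypass.length = H.dist u v :=
      le_antisymm (hql ▸ q.length_bypass_le) (SimpleGraph.dist_le _)
    exact q.support_bypass_subset (hx q.bypass q.bypass_isPath hbl)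
  rw [hs]
  exact List.mem_map.mpr ⟨x, hxq, rfl⟩

private lemma stressSet_nonempty (G : SimpleGraph V) :
    {n | ∃ U : Set V,
      (⋃ u ∈ U, ⋃ v ∈ U, G.stressInterval u v) = Set.univ ∧ U.ncard = n}.Nonempty := by
  refine ⟨(Set.univ : Set V).ncard, Set.univ, ?_, rfl⟩
  ext x
  simp only [Set.mem_iUnion, Set.mem_univ, iff_true, exists_prop]
  exact ⟨x, trivial, x, trivial, SimpleGraph.Reachable.refl x,
    fun p _ _ => p.start_mem_support⟩

end Aux

/-- the stress number of a Cartesian (box) product satisfies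
`sn(G □ H) ≤ min{sn(G)·|V(H)|, sn(H)·|V(G)|}`. -/
theorem stressNumber_boxProd_le {V W : Type*} [Fintype V] [Fintype W]
    (G : SimpleGraph V) (H : SimpleGraph W) :
    (G.boxProd H).stressNumber ≤
      min (G.stressNumber * Fintype.card W) (H.stressNumber * Fintype.card V) := by
  refine le_min ?_ ?_
  · obtain ⟨U, hU, hcard⟩ := Nat.sInf_mem (stressSet_nonempty G)
    refine Nat.sInf_le ⟨U ×ˢ (Set.univ : Set W), ?_, ?_⟩
    · ext ⟨x, w⟩
      simp only [Set.mem_iUnion, Set.mem_univ, iff_true, exists_prop]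
      have hx : x ∈ (⋃ u ∈ U, ⋃ v ∈ U, G.stressInterval u v) := hU ▸ Set.mem_univ x
      simp only [Set.mem_iUnion, exists_prop] at hx
      obtain ⟨u, hu, v, hv, hxuv⟩ := hx
      exact ⟨(u, w), ⟨hu, trivial⟩, (v, w), ⟨hv, trivial⟩, stressL hxuv w⟩
    · rw [← Nat.card_coe_set_eq, Nat.card_congr (Equiv.Set.prod U Set.univ),
        Nat.card_prod, Nat.card_coe_set_eq, Nat.card_coe_set_eq, hcard,
        Set.ncard_univ, Nat.card_eq_fintype_card]
      rfl
  · obtain ⟨U, hU, hcard⟩ := Nat.sInf_mem (stressSet_nonempty H)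
    refine Nat.sInf_le ⟨(Set.univ : Set V) ×ˢ U, ?_, ?_⟩
    · ext ⟨w, x⟩
      simp only [Set.mem_iUnion, Set.mem_univ, iff_true, exists_prop]
      have hx : x ∈ (⋃ u ∈ U, ⋃ v ∈ U, H.stressInterval u v) := hU ▸ Set.mem_univ x
      simp only [Set.mem_iUnion, exists_prop] at hx
      obtain ⟨u, hu, v, hv, hxuv⟩ := hx
      exact ⟨(w, u), ⟨trivial, hu⟩, (w, v), ⟨trivial, hv⟩, stressR hxuv w⟩
    · rw [← Nat.card_coe_set_eq, Nat.card_congr (Equiv.Set.prod Set.univ U),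
        Nat.card_prod, Nat.card_coe_set_eq, Nat.card_coe_set_eq, hcard,
        Set.ncard_univ, Nat.card_eq_fintype_card]
      exact Nat.mul_comm _ _
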